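/- Let M be an (n+2)×n matrix over a commutative ring R, and for i < j define D_{ij} = (-1)^{i+j} det(M with rows i and j deleted), extended skew-symmetrically by D_{ji} = -D_{ij} and D_{ii} = 0. Then the (n+2)×(n+2) matrix D satisfies D·M = 0. -/

import Mathlib

open Matrix

private lemma range_succAbove_comp {n : ℕ} (a : Fin (n + 2)) (b : Fin (n + 1)) :
    Set.range (fun k : Fin n => a.succAbove (b.succAbove k)) = {a, a.succAbove b}ᶜ := by
  have h : (fun k : Fin n => a.succAbove (b.succAbove k)) = a.succAbove ∘ b.succAbove := rfl
  rw [h]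
  ext x
  simp only [Set.range_comp, Fin.range_succAbove, Set.mem_image, Set.mem_compl_iff,
    Set.mem_singleton_iff, Set.mem_insert_iff, not_or]
  constructor
  · rintro ⟨y, hy, rfl⟩
    exact ⟨(Fin.succAbove_ne a y), fun hxy => hy (Fin.succAbove_right_injective hxy)⟩
  · rintro ⟨hxa, hxb⟩
    obtain ⟨y, rfl⟩ : x ∈ Set.range a.succAbove := by
      rw [Fin.range_succAbove]; exact hxa
    exact ⟨y, fun hyb => hxb (by rw [hyb]), rfl⟩

/-- Let `M` be an `(n+2) × n` matrix over a commutative ring `R`.  For `i < j` let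
`D i j = (-1)^(i+j) det(M with rows i and j deleted)`, extended skew-symmetrically with
zero diagonal.  Then `D * M = 0`. -/
theorem signed_minor_matrix_mul_eq_zero {R : Type*} [CommRing R] {n : ℕ}
    (M : Matrix (Fin (n + 2)) (Fin n) R)
    (D : Matrix (Fin (n + 2)) (Fin (n + 2)) R)
    (hdiag : ∀ i, D i i = 0)
    (hskew : ∀ i j, D j i = -D i j)
    (hval : ∀ i j : Fin (n + 2), ∀ hij : (i : ℕ) < (j : ℕ),
      D i j = (-1) ^ ((i : ℕ) + (j : ℕ)) *
        (M.submatrix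
          (fun k => j.succAbove
            ((⟨(i : ℕ), lt_of_lt_of_le hij (Nat.lt_succ_iff.mp j.isLt)⟩ : Fin (n + 1)).succAbove k))
          id).det) :
    D * M = 0 := by
  have key : ∀ (i : Fin (n + 2)) (r : Fin (n + 1)),
      D i (i.succAbove r) = (-1) ^ ((i : ℕ) + (r : ℕ) + 1) *
        (M.submatrix (fun k => i.succAbove (r.succAbove k)) id).det := by
    intro i r
    rcases lt_or_ge (r : ℕ) (i : ℕ) with h | h
    · have hcast : Fin.castSucc r < i := by
        rwa [Fin.lt_iff_val_lt_val, Fin.coe_castSucc]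
      rw [Fin.succAbove_of_castSucc_lt i r hcast, hskew,
        hval (Fin.castSucc r) i (by simpa using h)]
      simp only [Fin.coe_castSucc, Fin.eta]
      ring
    · have hle : i ≤ Fin.castSucc r := by
        rwa [Fin.le_iff_val_le_val, Fin.coe_castSucc]
      have hlt : (i : ℕ) < (r.succ : ℕ) := by
        rw [Fin.val_succ]; omega
      rw [Fin.succAbove_of_le_castSucc i r hle, hval i r.succ hlt]
      have hfun : ∀ hi : (i : ℕ) < n + 1,
          (fun k : Fin n => (r.succ).succAbove ((⟨(i : ℕ), hi⟩ : Fin (n + 1)).succAbove k))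
            = fun k => i.succAbove (r.succAbove k) := by
        intro hi
        have h1 : StrictMono
            (fun k : Fin n => (r.succ).succAbove ((⟨(i : ℕ), hi⟩ : Fin (n + 1)).succAbove k)) :=
          (Fin.strictMono_succAbove _).comp (Fin.strictMono_succAbove _)
        have h2 : StrictMono (fun k : Fin n => i.succAbove (r.succAbove k)) :=
          (Fin.strictMono_succAbove _).comp (Fin.strictMono_succAbove _)
        refine (StrictMono.range_inj h1 h2).mp ?_
        rw [range_succAbove_comp, range_succAbove_comp]
        have e1 : (r.succ).succAbove (⟨(i : ℕ), hi⟩ : Fin (n + 1)) = i := by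
          rw [Fin.succAbove_of_castSucc_lt]
          · exact Fin.ext rfl
          · simp only [Fin.lt_iff_val_lt_val, Fin.coe_castSucc, Fin.val_succ, Fin.val_mk]
            omega
        have e2 : i.succAbove r = r.succ := Fin.succAbove_of_le_castSucc i r hle
        rw [e1, e2, Set.pair_comm]
      rw [hfun]
      rw [Fin.val_succ, show (i : ℕ) + ((r : ℕ) + 1) = (i : ℕ) + (r : ℕ) + 1 from by ring]
  ext i c
  rw [Matrix.mul_apply, Matrix.zero_apply,
    Fin.sum_univ_succAbove (fun j => D i j * M j c) i, hdiag, zero_mul, zero_add]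
  set N : Matrix (Fin (n + 1)) (Fin (n + 1)) R :=
    Matrix.of fun r s =>
      (Fin.snoc (fun t : Fin n => M (i.succAbove r) t) (M (i.succAbove r) c) :
        Fin (n + 1) → R) s with hNdef
  have hNlast : ∀ r, N r (Fin.last n) = M (i.succAbove r) c := by
    intro r; simp [hNdef]
  have hNdet : N.det = 0 := by
    apply Matrix.det_zero_of_column_eq (i := Fin.castSucc c) (j := Fin.last n)
      (Fin.castSucc_lt_last c).ne
    intro k
    simp [hNdef]
  have hminor : ∀ r : Fin (n + 1),
      N.submatrix r.succAbove (Fin.last n).succAbove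
        = M.submatrix (fun k => i.succAbove (r.succAbove k)) id := by
    intro r
    ext k t
    simp [hNdef, Fin.succAbove_last]
  have hexp := Matrix.det_succ_column N (Fin.last n)
  rw [hNdet] at hexp
  simp only [Fin.val_last] at hexp
  have hterm : ∀ r : Fin (n + 1),
      D i (i.succAbove r) * M (i.succAbove r) c
        = (-1 : R) ^ ((i : ℕ) + 1 + n) *
            ((-1) ^ ((r : ℕ) + n) * N r (Fin.last n) *
              (N.submatrix r.succAbove (Fin.last n).succAbove).det) := by
    intro r
    rw [key i r, hminor r, hNlast r]
    have hs : ((-1 : R)) ^ ((i : ℕ) + 1 + n) * (-1) ^ ((r : ℕ) + n)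
        = (-1) ^ ((i : ℕ) + (r : ℕ) + 1) := by
      rw [← pow_add,
        show (i : ℕ) + 1 + n + ((r : ℕ) + n) = ((i : ℕ) + (r : ℕ) + 1) + 2 * n from by ring,
        pow_add, pow_mul]
      norm_num
    rw [← hs]
    ring
  simp only [hterm]
  rw [← Finset.mul_sum, ← hexp, mul_zero]
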